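/- arXiv:1411.6755 — 3 statements merged into one kernel-verified Lean document; each statement's English description precedes it below -/
import Mathlib

section
/- Let A, B ∈ SU(3,1) be such that A·e_i = B·e_i for i = 1, 2, 4, where e₁, e₂, e₃, e₄ is the standard basis of ℂ⁴ (i.e. the first, second and fourth columns of A and B coincide). Then A = B; in other words, the third column of a matrix in SU(3,1) is uniquely determined by its first, second and fourth columns. -/
open Complex ComplexConjugate Matrix Polynomial

noncomputable section

abbrev Vec4 := Fin 4 → ℂ
abbrev Mat4 := Matrix (Fin 4) (Fin 4) ℂ

/-- The Hermitian form of signature (3,1):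
`⟨z,w⟩ = z₁·conj(w₄) + z₂·conj(w₂) + z₃·conj(w₃) + z₄·conj(w₁)`. -/
def hermForm (z w : Vec4) : ℂ :=
  z 0 * conj (w 3) + z 1 * conj (w 1) + z 2 * conj (w 2) + z 3 * conj (w 0)

/-- The matrix of the Hermitian form. -/
def Hmat : Mat4 := !![0,0,0,1; 0,1,0,0; 0,0,1,0; 1,0,0,0]

/-- `A ∈ SU(3,1)`: `(conj A)ᵀ H A = H` and `det A = 1`. -/
def isSU31 (A : Mat4) : Prop := Aᴴ * Hmat * A = Hmat ∧ A.det = 1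

/-- Koranyi-Riemann cross-ratio. -/
def crossRatio (z1 z2 z3 z4 : Vec4) : ℂ :=
  (hermForm z3 z1 * hermForm z4 z2) / (hermForm z4 z1 * hermForm z3 z2)

/-- No two of the four vectors are complex multiples of one another. -/
def PairwiseNotProp4 (z1 z2 z3 z4 : Vec4) : Prop :=
  (∀ c : ℂ, z1 ≠ c • z2) ∧ (∀ c : ℂ, z1 ≠ c • z3) ∧ (∀ c : ℂ, z1 ≠ c • z4) ∧
  (∀ c : ℂ, z2 ≠ c • z3) ∧ (∀ c : ℂ, z2 ≠ c • z4) ∧ (∀ c : ℂ, z3 ≠ c • z4)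

/-- `u` is a nonzero complex multiple of `v`. -/
def PropNZ (u v : Vec4) : Prop := ∃ c : ℂ, c ≠ 0 ∧ u = c • v

/-- A loxodromic element of SU(3,1), equipped with its eigen-data. -/
structure Lox where
  M : Mat4
  hM : isSU31 M
  r : ℝ
  θ : ℝ
  φ : ℝ
  hr : 1 < r
  a : Vec4
  x : Vec4
  y : Vec4
  rp : Vec4
  hbasis : LinearIndependent ℂ ![a, x, y, rp]
  ha : M.mulVec a = ((r : ℂ) * Complex.exp ((θ : ℂ) * Complex.I)) • a
  hx : M.mulVec x = Complex.exp ((φ : ℂ) * Complex.I) • x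
  hy : M.mulVec y = Complex.exp (-(2*(θ : ℂ)+(φ : ℂ)) * Complex.I) • y
  hrp : M.mulVec rp = ((r : ℂ)⁻¹ * Complex.exp ((θ : ℂ) * Complex.I)) • rp
  hnull_a : hermForm a a = 0
  hnull_r : hermForm rp rp = 0
  hx1 : hermForm x x = 1
  hy1 : hermForm y y = 1

/-- Goldman's eta invariant `η(a,r;x)` for null `a`, `r` and positive `x`. -/
def etaV (aA rA xB : Vec4) : ℂ :=
  (hermForm aA xB * hermForm xB rA) / (hermForm aA rA * hermForm xB xB)

def eta1 (A B : Lox) : ℂ := etaV A.a A.rp B.x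
def eta2 (A B : Lox) : ℂ := etaV A.a A.rp B.y
def nu1 (A B : Lox) : ℂ := etaV B.a B.rp A.x
def nu2 (A B : Lox) : ℂ := etaV B.a B.rp A.y

def X1 (A B : Lox) : ℂ := crossRatio B.a A.a A.rp B.rp
def X2 (A B : Lox) : ℂ := crossRatio B.a A.rp A.a B.rp
def X3 (A B : Lox) : ℂ := crossRatio A.a A.rp B.a B.rp

def alpha1 (A B : Lox) : ℂ := crossRatio A.rp A.a B.x B.a
def alpha2 (A B : Lox) : ℂ := crossRatio A.rp A.a B.y B.a
def beta1 (A B : Lox) : ℂ := crossRatio B.rp B.a A.x A.a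
def beta2 (A B : Lox) : ℂ := crossRatio B.rp B.a A.y A.a

def etaIdx (i : Fin 2) (A B : Lox) : ℂ := if i = 0 then eta1 A B else eta2 A B
def nuIdx (j : Fin 2) (A B : Lox) : ℂ := if j = 0 then nu1 A B else nu2 A B
def alphaIdx (i : Fin 2) (A B : Lox) : ℂ := if i = 0 then alpha1 A B else alpha2 A B
def betaIdx (j : Fin 2) (A B : Lox) : ℂ := if j = 0 then beta1 A B else beta2 A B

/-- Non-singularity of the eigen-data of a pair of loxodromic elements. -/
def NonSingularV (aA xA yA rA aB xB yB rB : Vec4) : Prop :=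
  PairwiseNotProp4 aA rA aB rB ∧
  LinearIndependent ℂ ![aA, rA, aB, rB] ∧
  (etaV aA rA xB ≠ 0 ∨ etaV aA rA yB ≠ 0) ∧
  (etaV aB rB xA ≠ 0 ∨ etaV aB rB yA ≠ 0)

/-- The pair `(A,B)` of loxodromic elements is non-singular. -/
def NonSingular (A B : Lox) : Prop :=
  NonSingularV A.a A.x A.y A.rp B.a B.x B.y B.rp

/-- trace. -/
def tau (A : Mat4) : ℂ := A.trace

/-- `σ_A = (tr(A)² − tr(A²))/2`. -/
def sigma (A : Mat4) : ℂ := ((A.trace)^2 - (A^2).trace)/2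

/-- Cartan's angular invariant. -/
def cartan (z1 z2 z3 : Vec4) : ℝ :=
  Complex.arg (-(hermForm z1 z2 * hermForm z2 z3 * hermForm z3 z1))

/-- The diagonal matrix `E(κ,ψ)`. -/
def Emat (κ : ℂ) (ψ : ℝ) : Mat4 :=
  Matrix.diagonal
    ![Complex.exp κ,
      Complex.exp (-((ψ : ℂ) * Complex.I) + (conj κ - κ)/2),
      Complex.exp ((ψ : ℂ) * Complex.I + (conj κ - κ)/2),
      Complex.exp (-(conj κ))]

/-- Anti-holomorphic isometric involution `z ↦ M·conj(z)` of `ℂ^{3,1}`. -/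
def AntiHolInv (M : Mat4) : Prop :=
  M * (M.map (starRingEnd ℂ)) = 1 ∧
  ∀ z w : Vec4, hermForm (M.mulVec (star z)) (M.mulVec (star w)) = conj (hermForm z w)

/-- a matrix in SU(3,1) is determined by its first, second and
fourth columns. -/
theorem su31_third_column_determined (A B : Mat4) (hA : isSU31 A) (hB : isSU31 B)
    (h0 : ∀ i, A i 0 = B i 0) (h1 : ∀ i, A i 1 = B i 1) (h3 : ∀ i, A i 3 = B i 3) :
    A = B := by
  obtain ⟨hAH, hAdet⟩ := hA
  obtain ⟨hBH, hBdet⟩ := hB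
  have hdetA : IsUnit A.det := by simp [hAdet]
  have hdetAH : IsUnit Aᴴ.det := by simp [Matrix.det_conjTranspose, hAdet]
  set C : Mat4 := A⁻¹ * B with hCdef
  have hAinvA : A⁻¹ * A = 1 := Matrix.nonsing_inv_mul A hdetA
  have hAAinv : A * A⁻¹ = 1 := Matrix.mul_nonsing_inv A hdetA
  have hB' : ∀ k j, j ≠ 2 → B k j = A k j := by
    intro k j hj
    fin_cases j
    · exact (h0 k).symm
    · exact (h1 k).symm
    · exact absurd rfl hj
    · exact (h3 k).symm
  have hcol : ∀ i j, j ≠ 2 → C i j = (1 : Mat4) i j := by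
    intro i j hj
    have h : C i j = ∑ k, A⁻¹ i k * B k j := Matrix.mul_apply
    rw [h]
    have h2 : ∑ k, A⁻¹ i k * B k j = ∑ k, A⁻¹ i k * A k j := by
      refine Finset.sum_congr rfl fun k _ => ?_
      rw [hB' k j hj]
    rw [h2, ← Matrix.mul_apply, hAinvA]
  have key : (A⁻¹)ᴴ * Hmat * A⁻¹ = Hmat := by
    conv_lhs => rw [← hAH]
    rw [Matrix.conjTranspose_nonsing_inv]
    calc (Aᴴ)⁻¹ * (Aᴴ * Hmat * A) * A⁻¹
        = ((Aᴴ)⁻¹ * Aᴴ) * Hmat * (A * A⁻¹) := by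
          simp only [Matrix.mul_assoc]
      _ = Hmat := by
          rw [Matrix.nonsing_inv_mul _ hdetAH, hAAinv, Matrix.one_mul, Matrix.mul_one]
  have hC : Cᴴ * Hmat * C = Hmat := by
    have h : Cᴴ * Hmat * C = Bᴴ * ((A⁻¹)ᴴ * Hmat * A⁻¹) * B := by
      rw [hCdef, Matrix.conjTranspose_mul]
      simp only [Matrix.mul_assoc]
    rw [h, key, hBH]
  have c00 : C 0 0 = 1 := by simpa using hcol 0 0 (by decide)
  have c10 : C 1 0 = 0 := by simpa using hcol 1 0 (by decide)
  have c20 : C 2 0 = 0 := by simpa using hcol 2 0 (by decide)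
  have c30 : C 3 0 = 0 := by simpa using hcol 3 0 (by decide)
  have c01 : C 0 1 = 0 := by simpa using hcol 0 1 (by decide)
  have c11 : C 1 1 = 1 := by simpa using hcol 1 1 (by decide)
  have c21 : C 2 1 = 0 := by simpa using hcol 2 1 (by decide)
  have c31 : C 3 1 = 0 := by simpa using hcol 3 1 (by decide)
  have c03 : C 0 3 = 0 := by simpa using hcol 0 3 (by decide)
  have c13 : C 1 3 = 0 := by simpa using hcol 1 3 (by decide)
  have c23 : C 2 3 = 0 := by simpa using hcol 2 3 (by decide)
  have c33 : C 3 3 = 1 := by simpa using hcol 3 3 (by decide)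
  have e20 := congrFun (congrFun hC 2) 0
  have e21 := congrFun (congrFun hC 2) 1
  have e23 := congrFun (congrFun hC 2) 3
  rw [show (Hmat 2 0 : ℂ) = 0 by rfl] at e20
  rw [show (Hmat 2 1 : ℂ) = 0 by rfl] at e21
  rw [show (Hmat 2 3 : ℂ) = 0 by rfl] at e23
  simp only [Matrix.mul_apply, Matrix.conjTranspose_apply, Fin.sum_univ_four] at e20 e21 e23
  rw [show (Hmat 0 0 : ℂ) = 0 by rfl, show (Hmat 1 0 : ℂ) = 0 by rfl,
    show (Hmat 2 0 : ℂ) = 0 by rfl, show (Hmat 3 0 : ℂ) = 1 by rfl,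
    c00, c10, c20, c30] at e20
  rw [show (Hmat 0 1 : ℂ) = 0 by rfl, show (Hmat 1 1 : ℂ) = 1 by rfl,
    show (Hmat 2 1 : ℂ) = 0 by rfl, show (Hmat 3 1 : ℂ) = 0 by rfl,
    c01, c11, c21, c31] at e21
  rw [show (Hmat 0 3 : ℂ) = 1 by rfl, show (Hmat 1 3 : ℂ) = 0 by rfl,
    show (Hmat 2 3 : ℂ) = 0 by rfl, show (Hmat 3 3 : ℂ) = 0 by rfl,
    c03, c13, c23, c33] at e23
  have c32 : C 3 2 = 0 := by
    have h : star (C 3 2) = 0 := by linear_combination e20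
    simpa using h
  have c12 : C 1 2 = 0 := by
    have h : star (C 1 2) = 0 := by linear_combination e21
    simpa using h
  have c02 : C 0 2 = 0 := by
    have h : star (C 0 2) = 0 := by linear_combination e23
    simpa using h
  clear e20 e21 e23 hC key hB' hcol hAH hBH
  have hdiag : C = Matrix.diagonal ![1, 1, C 2 2, 1] := by
    ext i j
    fin_cases i <;> fin_cases j <;>
      simp [Matrix.diagonal, c00, c10, c20, c30, c01, c11, c21, c31,
        c02, c12, c32, c03, c13, c23, c33]
  have hCdet : C.det = 1 := by
    rw [hCdef, Matrix.det_mul, Matrix.det_nonsing_inv, hAdet, hBdet]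
    simp
  have c22 : C 2 2 = 1 := by
    rw [hdiag, Matrix.det_diagonal, Fin.prod_univ_four] at hCdet
    simpa using hCdet
  have hC1 : C = 1 := by
    rw [hdiag, c22]
    have h : (![1, 1, (1:ℂ), 1] : Fin 4 → ℂ) = fun _ => 1 := by
      funext i; fin_cases i <;> rfl
    rw [h, Matrix.diagonal_one]
  have hf : A * C = B := by
    rw [hCdef, ← Matrix.mul_assoc, hAAinv, Matrix.one_mul]
  rw [hC1, Matrix.mul_one] at hf
  exact hf
end
end

section
/- Let z₁, z₂, z₃, z₄ be nonzero null vectors in ℂ^{3,1}, no two of which are complex multiples of one another. Set 𝕏₁ = 𝕏(z₁,z₂,z₃,z₄), 𝕏₂ = 𝕏(z₁,z₃,z₂,z₄), 𝕏₃ = 𝕏(z₂,z₃,z₁,z₄). Then 2·|𝕏₁|²·Re(𝕏₃) ≥ |𝕏₁|² + |𝕏₂|² + 1 − 2·Re(𝕏₁ + 𝕏₂). -/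
open Complex ComplexConjugate Matrix Polynomial

noncomputable section

/- auxiliary lemmas -/

lemma det_four' (M : Mat4) : M.det =
    M 0 0 * (M 1 1 * (M 2 2 * M 3 3 - M 2 3 * M 3 2) - M 1 2 * (M 2 1 * M 3 3 - M 2 3 * M 3 1)
      + M 1 3 * (M 2 1 * M 3 2 - M 2 2 * M 3 1))
  - M 0 1 * (M 1 0 * (M 2 2 * M 3 3 - M 2 3 * M 3 2) - M 1 2 * (M 2 0 * M 3 3 - M 2 3 * M 3 0)
      + M 1 3 * (M 2 0 * M 3 2 - M 2 2 * M 3 0))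
  + M 0 2 * (M 1 0 * (M 2 1 * M 3 3 - M 2 3 * M 3 1) - M 1 1 * (M 2 0 * M 3 3 - M 2 3 * M 3 0)
      + M 1 3 * (M 2 0 * M 3 1 - M 2 1 * M 3 0))
  - M 0 3 * (M 1 0 * (M 2 1 * M 3 2 - M 2 2 * M 3 1) - M 1 1 * (M 2 0 * M 3 2 - M 2 2 * M 3 0)
      + M 1 2 * (M 2 0 * M 3 1 - M 2 1 * M 3 0)) := by
  rw [Matrix.det_succ_row_zero]
  simp [Fin.sum_univ_four, Matrix.det_fin_three, Matrix.submatrix_apply, Fin.succAbove]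
  simp (config := { decide := true }) [Fin.succ, Fin.castSucc, Fin.castAdd, Fin.castLE, Fin.lt_def]
  ring

lemma hdetH' : Hmat.det = -1 := by
  rw [det_four']; simp [Hmat]

lemma herm_conj' (z w : Vec4) : conj (hermForm z w) = hermForm w z := by
  simp only [hermForm, map_add, _root_.map_mul, Complex.conj_conj]; ring

lemma re_mul_ofReal' (z : ℂ) (r : ℝ) : (z * (r : ℂ)).re = z.re * r := by
  simp [Complex.mul_re]

lemma pair_zero' (x y : ℂ) (h : x * conj x + y * conj y = 0) : x = 0 ∧ y = 0 := by
  rw [Complex.mul_conj, Complex.mul_conj] at h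
  norm_cast at h
  have hx := Complex.normSq_nonneg x
  have hy := Complex.normSq_nonneg y
  exact ⟨Complex.normSq_eq_zero.mp (by linarith), Complex.normSq_eq_zero.mp (by linarith)⟩

lemma prop_of_herm_zero' (z w : Vec4) (hz : z ≠ 0) (hw : w ≠ 0)
    (hnz : hermForm z z = 0) (hnw : hermForm w w = 0) (h0 : hermForm z w = 0) :
    ∃ c : ℂ, z = c • w := by
  have hwz : hermForm w z = 0 := by rw [← herm_conj', h0, map_zero]
  simp only [hermForm] at hnz hnw h0 hwz
  by_cases hz0 : z 0 = 0
  · have hz0c : conj (z 0) = 0 := by rw [hz0]; simp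
    obtain ⟨hz1, hz2⟩ := pair_zero' (z 1) (z 2)
      (by linear_combination hnz - conj (z 3) * hz0 - z 3 * hz0c)
    have hz3 : z 3 ≠ 0 := by
      intro h3
      exact hz (funext fun i => by fin_cases i <;> simp [hz0, hz1, hz2, h3])
    have hw0c : conj (w 0) = 0 := by
      have : z 3 * conj (w 0) = 0 := by
        linear_combination h0 - conj (w 3) * hz0 - conj (w 1) * hz1 - conj (w 2) * hz2
      rcases mul_eq_zero.mp this with h | h
      · exact absurd h hz3
      · exact h
    have hw0 : w 0 = 0 := by simpa using hw0c
    obtain ⟨hw1, hw2⟩ := pair_zero' (w 1) (w 2)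
      (by linear_combination hnw - conj (w 3) * hw0 - w 3 * hw0c)
    have hw3 : w 3 ≠ 0 := by
      intro h3
      exact hw (funext fun i => by fin_cases i <;> simp [hw0, hw1, hw2, h3])
    refine ⟨z 3 / w 3, funext fun i => ?_⟩
    fin_cases i <;> simp [Pi.smul_apply, smul_eq_mul, hz0, hz1, hz2, hw0, hw1, hw2]
    field_simp
  · -- z 0 ≠ 0
    have hz0c : conj (z 0) ≠ 0 := by
      intro h; exact hz0 (by simpa using h)
    obtain ⟨hA, hB⟩ := pair_zero' (w 0 * z 1 - z 0 * w 1) (w 0 * z 2 - z 0 * w 2)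
      (by
        simp only [map_sub, _root_.map_mul]
        linear_combination (w 0 * conj (w 0)) * hnz - (w 0 * conj (z 0)) * h0
          - (z 0 * conj (w 0)) * hwz + (z 0 * conj (z 0)) * hnw)
    have hC : w 0 * z 3 - z 0 * w 3 = 0 := by
      have h : (w 0 * z 3 - z 0 * w 3) * conj (z 0) = 0 := by
        linear_combination w 0 * hnz - z 0 * hwz - conj (z 1) * hA - conj (z 2) * hB
      rcases mul_eq_zero.mp h with h | h
      · exact h
      · exact absurd h hz0c
    by_cases hw0 : w 0 = 0
    · exfalso
      apply hw
      have h1 : w 1 = 0 := by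
        have h : z 0 * w 1 = 0 := by linear_combination z 1 * hw0 - hA
        rcases mul_eq_zero.mp h with h | h
        · exact absurd h hz0
        · exact h
      have h2 : w 2 = 0 := by
        have h : z 0 * w 2 = 0 := by linear_combination z 2 * hw0 - hB
        rcases mul_eq_zero.mp h with h | h
        · exact absurd h hz0
        · exact h
      have h3 : w 3 = 0 := by
        have h : z 0 * w 3 = 0 := by linear_combination z 3 * hw0 - hC
        rcases mul_eq_zero.mp h with h | h
        · exact absurd h hz0
        · exact h
      exact funext fun i => by fin_cases i <;> simp [hw0, h1, h2, h3]
    · have hall : ∀ i : Fin 4, w 0 * z i - z 0 * w i = 0 := by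
        intro i; fin_cases i
        · show w 0 * z 0 - z 0 * w 0 = 0; ring
        · exact hA
        · exact hB
        · exact hC
      refine ⟨z 0 / w 0, funext fun i => ?_⟩
      have h := hall i
      simp only [Pi.smul_apply, smul_eq_mul]
      rw [div_mul_eq_mul_div, eq_div_iff hw0]
      linear_combination h


/-- `2|𝕏₁|² Re(𝕏₃) ≥ |𝕏₁|² + |𝕏₂|² + 1 − 2 Re(𝕏₁ + 𝕏₂)`. -/
theorem crossRatio_inequality (z1 z2 z3 z4 : Vec4)
    (hz1 : z1 ≠ 0) (hz2 : z2 ≠ 0) (hz3 : z3 ≠ 0) (hz4 : z4 ≠ 0)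
    (hn1 : hermForm z1 z1 = 0) (hn2 : hermForm z2 z2 = 0)
    (hn3 : hermForm z3 z3 = 0) (hn4 : hermForm z4 z4 = 0)
    (hp : PairwiseNotProp4 z1 z2 z3 z4) :
    2 * ‖crossRatio z1 z2 z3 z4‖^2 * (crossRatio z2 z3 z1 z4).re ≥
      ‖crossRatio z1 z2 z3 z4‖^2 +
      ‖crossRatio z1 z3 z2 z4‖^2 + 1 -
      2 * (crossRatio z1 z2 z3 z4 + crossRatio z1 z3 z2 z4).re := by
  obtain ⟨h12, h13, h14, h23, h24, h34⟩ := hp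
  have key_ne : ∀ (u v : Vec4), u ≠ 0 → v ≠ 0 → hermForm u u = 0 → hermForm v v = 0 →
      (∀ c : ℂ, u ≠ c • v) → hermForm v u ≠ 0 := by
    intro u v hu hv huu hvv hne h0
    have h0' : hermForm u v = 0 := by rw [← herm_conj', h0, map_zero]
    obtain ⟨c, hc⟩ := prop_of_herm_zero' u v hu hv huu hvv h0'
    exact hne c hc
  have hp0 : hermForm z2 z1 ≠ 0 := key_ne z1 z2 hz1 hz2 hn1 hn2 h12
  have ha0 : hermForm z3 z1 ≠ 0 := key_ne z1 z3 hz1 hz3 hn1 hn3 h13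
  have hc0 : hermForm z4 z1 ≠ 0 := key_ne z1 z4 hz1 hz4 hn1 hn4 h14
  have hd0 : hermForm z3 z2 ≠ 0 := key_ne z2 z3 hz2 hz3 hn2 hn3 h23
  have hb0 : hermForm z4 z2 ≠ 0 := key_ne z2 z4 hz2 hz4 hn2 hn4 h24
  have hq0 : hermForm z4 z3 ≠ 0 := key_ne z3 z4 hz3 hz4 hn3 hn4 h34
  have c12 : hermForm z1 z2 = conj (hermForm z2 z1) := (herm_conj' z2 z1).symm
  have c13 : hermForm z1 z3 = conj (hermForm z3 z1) := (herm_conj' z3 z1).symm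
  have c14 : hermForm z1 z4 = conj (hermForm z4 z1) := (herm_conj' z4 z1).symm
  have c23 : hermForm z2 z3 = conj (hermForm z3 z2) := (herm_conj' z3 z2).symm
  have c24 : hermForm z2 z4 = conj (hermForm z4 z2) := (herm_conj' z4 z2).symm
  have c34 : hermForm z3 z4 = conj (hermForm z4 z3) := (herm_conj' z4 z3).symm
  set vs : Fin 4 → Vec4 := ![z1, z2, z3, z4] with hvs
  set B : Mat4 := Matrix.of (fun i j => vs j i) with hB
  have hG : Bᴴ * Hmat * B = Matrix.of (fun i j => hermForm (vs j) (vs i)) := by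
    ext i j
    simp [Matrix.mul_apply, Matrix.conjTranspose_apply, Hmat, hermForm, Fin.sum_univ_four, hB]
    ring
  have hexp : (Matrix.of (fun i j => hermForm (vs j) (vs i))).det = -(conj B.det * B.det) := by
    rw [← hG, Matrix.det_mul, Matrix.det_mul, Matrix.det_conjTranspose, hdetH',
      show star B.det = conj B.det from rfl]
    ring
  rw [det_four'] at hexp
  simp only [Matrix.of_apply, hvs, Matrix.cons_val_zero, Matrix.cons_val_one, Matrix.head_cons,
    Matrix.cons_val_two, Matrix.tail_cons, Matrix.cons_val_three] at hexp
  rw [hn1, hn2, hn3, hn4, c12, c13, c14, c23, c24, c34] at hexp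
  simp only [crossRatio]
  rw [c12, c13, c23]
  set a := hermForm z3 z1 with hadef
  set b := hermForm z4 z2 with hbdef
  set cc := hermForm z4 z1 with hccdef
  set d := hermForm z3 z2 with hddef
  set p := hermForm z2 z1 with hpdef
  set q := hermForm z4 z3 with hqdef
  set K := B.det with hKdef
  have hstarC : (a * conj p * q * conj b + conj a * p * conj q * b)
      + (a * b * conj cc * conj d + conj a * conj b * cc * d)
      + (p * q * conj cc * d + conj p * conj q * cc * conj d)
      - a * conj a * (b * conj b) - p * conj p * (q * conj q) - cc * conj cc * (d * conj d)
      = conj K * K := by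
    linear_combination -hexp
  have hKC : conj K * K = ((Complex.normSq K : ℝ) : ℂ) := by
    rw [mul_comm, Complex.mul_conj]
  rw [hKC] at hstarC
  have w1 : conj a * p * conj q * b = conj (a * conj p * q * conj b) := by
    simp only [_root_.map_mul, Complex.conj_conj]; try ring
  have w2 : conj a * conj b * cc * d = conj (a * b * conj cc * conj d) := by
    simp only [_root_.map_mul, Complex.conj_conj]; try ring
  have w3 : conj p * conj q * cc * conj d = conj (p * q * conj cc * d) := by
    simp only [_root_.map_mul, Complex.conj_conj]; try ring
  have w4 : a * conj a * (b * conj b) = ((Complex.normSq a * Complex.normSq b : ℝ) : ℂ) := by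
    rw [Complex.mul_conj, Complex.mul_conj]; norm_cast
  have w5 : p * conj p * (q * conj q) = ((Complex.normSq p * Complex.normSq q : ℝ) : ℂ) := by
    rw [Complex.mul_conj, Complex.mul_conj]; norm_cast
  have w6 : cc * conj cc * (d * conj d) = ((Complex.normSq cc * Complex.normSq d : ℝ) : ℂ) := by
    rw [Complex.mul_conj, Complex.mul_conj]; norm_cast
  rw [w1, w2, w3, Complex.add_conj, Complex.add_conj, Complex.add_conj, w4, w5, w6] at hstarC
  have star : 2 * (a * conj p * q * conj b).re + 2 * (a * b * conj cc * conj d).re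
      + 2 * (p * q * conj cc * d).re
      - Complex.normSq a * Complex.normSq b - Complex.normSq p * Complex.normSq q
      - Complex.normSq cc * Complex.normSq d = Complex.normSq K := by
    exact_mod_cast hstarC
  have hnsa : Complex.normSq a ≠ 0 := (Complex.normSq_pos.mpr ha0).ne'
  have hnsb : Complex.normSq b ≠ 0 := (Complex.normSq_pos.mpr hb0).ne'
  have hnsc : Complex.normSq cc ≠ 0 := (Complex.normSq_pos.mpr hc0).ne'
  have hnsd : Complex.normSq d ≠ 0 := (Complex.normSq_pos.mpr hd0).ne'
  have hccd : conj d ≠ 0 := by rw [starRingEnd_apply]; exact star_ne_zero.mpr hd0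
  have hcca : conj a ≠ 0 := by rw [starRingEnd_apply]; exact star_ne_zero.mpr ha0
  have e1 : ‖(a * b) / (cc * d)‖ ^ 2 * (Complex.normSq cc * Complex.normSq d)
      = Complex.normSq a * Complex.normSq b := by
    rw [Complex.sq_norm, Complex.normSq_div, Complex.normSq_mul, Complex.normSq_mul]
    field_simp
  have e2 : ‖(p * q) / (cc * conj d)‖ ^ 2 * (Complex.normSq cc * Complex.normSq d)
      = Complex.normSq p * Complex.normSq q := by
    rw [Complex.sq_norm, Complex.normSq_div, Complex.normSq_mul, Complex.normSq_mul,
      Complex.normSq_conj]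
    field_simp
  have e3 : ((a * b) / (cc * d)).re * (Complex.normSq cc * Complex.normSq d)
      = (a * b * conj cc * conj d).re := by
    rw [← re_mul_ofReal']
    congr 1
    rw [Complex.ofReal_mul, ← Complex.mul_conj, ← Complex.mul_conj]
    field_simp
  have e4 : ((p * q) / (cc * conj d)).re * (Complex.normSq cc * Complex.normSq d)
      = (p * q * conj cc * d).re := by
    rw [← re_mul_ofReal']
    congr 1
    rw [Complex.ofReal_mul, ← Complex.mul_conj, ← Complex.mul_conj]
    field_simp
  have e5 : ((conj p * q) / (b * conj a)).re * (Complex.normSq a * Complex.normSq b)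
      = (a * conj p * q * conj b).re := by
    rw [← re_mul_ofReal']
    congr 1
    rw [Complex.ofReal_mul, ← Complex.mul_conj, ← Complex.mul_conj]
    field_simp
  have hS : 0 < Complex.normSq cc * Complex.normSq d :=
    mul_pos (Complex.normSq_pos.mpr hc0) (Complex.normSq_pos.mpr hd0)
  have key : (2 * ‖(a * b) / (cc * d)‖ ^ 2 * (((conj p * q) / (b * conj a)).re)
      - (‖(a * b) / (cc * d)‖ ^ 2 + ‖(p * q) / (cc * conj d)‖ ^ 2 + 1
        - 2 * (((a * b) / (cc * d)) + ((p * q) / (cc * conj d))).re))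
      * (Complex.normSq cc * Complex.normSq d) = Complex.normSq K := by
    simp only [Complex.add_re]
    linear_combination (2 * (((conj p * q) / (b * conj a)).re) - 1) * e1 - e2
      + 2 * e3 + 2 * e4 + 2 * e5 + star
  nlinarith [key, Complex.normSq_nonneg K, hS]
end
end

section
/- Let A and B be loxodromic elements of SU(3,1) with eigen-data such that the pair (A,B) is non-singular. Then there is no complex linear subspace V of ℂ⁴ with 0 < dim V < 4 that is invariant under both A and B; in particular, A and B have no common eigenvector, and the group generated by A and B is irreducible (it preserves no proper complex totally geodesic subspace of complex hyperbolic 3-space). -/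
open Complex ComplexConjugate Matrix Polynomial

noncomputable section

section Basics

lemma hermForm_add_left (z w u : Vec4) :
    hermForm (z + w) u = hermForm z u + hermForm w u := by
  simp [hermForm]; ring

lemma hermForm_add_right (z w u : Vec4) :
    hermForm z (w + u) = hermForm z w + hermForm z u := by
  simp [hermForm, map_add]; ring

lemma hermForm_smul_left (c : ℂ) (z w : Vec4) :
    hermForm (c • z) w = c * hermForm z w := by
  simp [hermForm, Pi.smul_apply, smul_eq_mul]; ring

lemma hermForm_smul_right (c : ℂ) (z w : Vec4) :
    hermForm z (c • w) = conj c * hermForm z w := by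
  simp [hermForm, Pi.smul_apply, smul_eq_mul, _root_.map_mul]; ring

lemma hermForm_zero_left (w : Vec4) : hermForm 0 w = 0 := by
  simp [hermForm]

lemma hermForm_zero_right (z : Vec4) : hermForm z 0 = 0 := by
  simp [hermForm]

lemma hermForm_conj (z w : Vec4) : hermForm w z = conj (hermForm z w) := by
  simp [hermForm, map_add, _root_.map_mul]; ring

lemma hermForm_eq_dot (z w : Vec4) :
    hermForm z w = dotProduct (star w) (Hmat.mulVec z) := by
  simp [hermForm, Hmat, dotProduct, Matrix.mulVec, Fin.sum_univ_four,
    Matrix.vecHead, Matrix.vecTail]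
  ring

lemma eq_zero_of_herm_right_eq_zero {z : Vec4} (h : ∀ w, hermForm z w = 0) : z = 0 := by
  have h0 := h (Pi.single 0 1)
  have h1 := h (Pi.single 1 1)
  have h2 := h (Pi.single 2 1)
  have h3 := h (Pi.single 3 1)
  simp [hermForm, Pi.single_apply] at h0 h1 h2 h3
  funext i
  fin_cases i <;> simp_all

lemma herm_eq_zero_of_span {z : Vec4} {f : Fin 4 → Vec4}
    (hspan : Submodule.span ℂ (Set.range f) = ⊤) (h : ∀ i, hermForm z (f i) = 0) :
    z = 0 := by
  apply eq_zero_of_herm_right_eq_zero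
  intro w
  have hw : w ∈ Submodule.span ℂ (Set.range f) := by rw [hspan]; exact Submodule.mem_top
  induction hw using Submodule.span_induction with
  | mem x hx => obtain ⟨i, rfl⟩ := hx; exact h i
  | zero => exact hermForm_zero_right z
  | add x y _ _ hx hy => rw [hermForm_add_right, hx, hy, add_zero]
  | smul c x _ hx => rw [hermForm_smul_right, hx, mul_zero]

lemma herm_mulVec {M : Mat4} (hM : Mᴴ * Hmat * M = Hmat) (z w : Vec4) :
    hermForm (M.mulVec z) (M.mulVec w) = hermForm z w := by
  rw [hermForm_eq_dot, hermForm_eq_dot, Matrix.star_mulVec,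
    ← dotProduct_mulVec, Matrix.mulVec_mulVec, Matrix.mulVec_mulVec, hM]

end Basics
section Eigen

lemma eigen_orth {M : Mat4} (hM : Mᴴ * Hmat * M = Hmat) {v w : Vec4} {lv lw : ℂ}
    (hv : M.mulVec v = lv • v) (hw : M.mulVec w = lw • w)
    (h1 : lv * conj lw ≠ 1) : hermForm v w = 0 := by
  have h := herm_mulVec hM v w
  rw [hv, hw, hermForm_smul_left, hermForm_smul_right] at h
  have h2 : (lv * conj lw - 1) * hermForm v w = 0 := by linear_combination h
  rcases mul_eq_zero.mp h2 with h3 | h3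
  · exact absurd (by linear_combination h3) h1
  · exact h3

lemma ne_of_abs_ne {z w : ℂ} (h : ‖z‖ ≠ ‖w‖) : z ≠ w :=
  fun hc => h (by rw [hc])

namespace Lox

variable (L : Lox)

def lamA : ℂ := (L.r : ℂ) * Complex.exp ((L.θ : ℂ) * Complex.I)
def lamX : ℂ := Complex.exp ((L.φ : ℂ) * Complex.I)
def lamY : ℂ := Complex.exp (-(2*(L.θ : ℂ)+(L.φ : ℂ)) * Complex.I)
def lamR : ℂ := (L.r : ℂ)⁻¹ * Complex.exp ((L.θ : ℂ) * Complex.I)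

lemma rpos : (0:ℝ) < L.r := by linarith [L.hr]

lemma abs_lamA : ‖L.lamA‖ = L.r := by
  have h1 : ‖((L.r:ℂ))‖ = L.r := by
    rw [Complex.norm_real, Real.norm_eq_abs, abs_of_pos L.rpos]
  simp [lamA, _root_.map_mul, Complex.norm_exp_ofReal_mul_I, h1, L.rpos.le]

lemma abs_lamX : ‖L.lamX‖ = 1 := by
  simp [lamX, Complex.norm_exp_ofReal_mul_I]

lemma abs_lamY : ‖L.lamY‖ = 1 := by
  have : (-(2*(L.θ : ℂ)+(L.φ : ℂ)) * Complex.I).re = 0 := by simp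
  simp [lamY, Complex.norm_exp, this]

lemma abs_lamR : ‖L.lamR‖ = L.r⁻¹ := by
  have h1 : ‖(((L.r:ℂ))⁻¹)‖ = L.r⁻¹ := by
    rw [norm_inv, Complex.norm_real, Real.norm_eq_abs, abs_of_pos L.rpos]
  simp [lamR, _root_.map_mul, Complex.norm_exp_ofReal_mul_I, h1]

lemma rinv_lt : L.r⁻¹ < 1 := by
  rw [inv_lt_one_iff₀]; right; exact L.hr

lemma haa : L.M.mulVec L.a = L.lamA • L.a := L.ha
lemma hxx : L.M.mulVec L.x = L.lamX • L.x := L.hx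
lemma hyy : L.M.mulVec L.y = L.lamY • L.y := L.hy
lemma hrr : L.M.mulVec L.rp = L.lamR • L.rp := L.hrp

lemma herm_x_a : hermForm L.x L.a = 0 := by
  refine eigen_orth L.hM.1 L.hxx L.haa (ne_of_abs_ne ?_)
  simp [_root_.map_mul, L.abs_lamX, L.abs_lamA, Complex.norm_conj]
  intro hc; linarith [L.hr]

lemma herm_y_a : hermForm L.y L.a = 0 := by
  refine eigen_orth L.hM.1 L.hyy L.haa (ne_of_abs_ne ?_)
  simp [_root_.map_mul, L.abs_lamY, L.abs_lamA, Complex.norm_conj]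
  intro hc; linarith [L.hr]

lemma herm_x_r : hermForm L.x L.rp = 0 := by
  refine eigen_orth L.hM.1 L.hxx L.hrr (ne_of_abs_ne ?_)
  simp [_root_.map_mul, L.abs_lamX, L.abs_lamR, Complex.norm_conj]
  intro hc; linarith [L.hr]

lemma herm_y_r : hermForm L.y L.rp = 0 := by
  refine eigen_orth L.hM.1 L.hyy L.hrr (ne_of_abs_ne ?_)
  simp [_root_.map_mul, L.abs_lamY, L.abs_lamR, Complex.norm_conj]
  intro hc; linarith [L.hr]

lemma herm_a_x : hermForm L.a L.x = 0 := by rw [hermForm_conj, L.herm_x_a, map_zero]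
lemma herm_a_y : hermForm L.a L.y = 0 := by rw [hermForm_conj, L.herm_y_a, map_zero]
lemma herm_r_x : hermForm L.rp L.x = 0 := by rw [hermForm_conj, L.herm_x_r, map_zero]
lemma herm_r_y : hermForm L.rp L.y = 0 := by rw [hermForm_conj, L.herm_y_r, map_zero]

lemma lamA_ne_lamX : L.lamA ≠ L.lamX := by
  refine ne_of_abs_ne ?_; rw [L.abs_lamA, L.abs_lamX]; intro hc; linarith [L.hr]

lemma lamA_ne_lamY : L.lamA ≠ L.lamY := by
  refine ne_of_abs_ne ?_; rw [L.abs_lamA, L.abs_lamY]; intro hc; linarith [L.hr]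

lemma lamA_ne_lamR : L.lamA ≠ L.lamR := by
  refine ne_of_abs_ne ?_; rw [L.abs_lamA, L.abs_lamR]
  intro hc; linarith [L.rinv_lt, L.hr]

lemma lamR_ne_lamX : L.lamR ≠ L.lamX := by
  refine ne_of_abs_ne ?_; rw [L.abs_lamR, L.abs_lamX]; intro hc; linarith [L.rinv_lt]

lemma lamR_ne_lamY : L.lamR ≠ L.lamY := by
  refine ne_of_abs_ne ?_; rw [L.abs_lamR, L.abs_lamY]; intro hc; linarith [L.rinv_lt]

/-- The eigenbasis of a loxodromic element. -/
def bas : Module.Basis (Fin 4) ℂ Vec4 :=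
  basisOfLinearIndependentOfCardEqFinrank L.hbasis (by simp [Module.finrank_pi])

lemma bas_span : Submodule.span ℂ (Set.range ![L.a, L.x, L.y, L.rp]) = ⊤ := by
  have := L.bas.span_eq
  rwa [show ⇑L.bas = ![L.a, L.x, L.y, L.rp] from
    coe_basisOfLinearIndependentOfCardEqFinrank _ _] at this

lemma a_ne_zero : L.a ≠ 0 := by
  have := L.hbasis.ne_zero 0; simpa using this

lemma rp_ne_zero : L.rp ≠ 0 := by
  have := L.hbasis.ne_zero 3; simpa using this

lemma herm_a_r_ne : hermForm L.a L.rp ≠ 0 := by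
  intro hc
  refine L.a_ne_zero (herm_eq_zero_of_span L.bas_span ?_)
  intro i
  fin_cases i
  · simpa using L.hnull_a
  · simpa using L.herm_a_x
  · simpa using L.herm_a_y
  · simpa using hc

end Lox

end Eigen
section Gram

namespace Lox

variable (L : Lox)

/-- Matrix with columns the eigenbasis. -/
def Pmat : Mat4 := Matrix.of fun i j => ![L.a, L.x, L.y, L.rp] j i

lemma detP_ne_zero : L.Pmat.det ≠ 0 := by
  intro hdet
  obtain ⟨v, hv0, hv⟩ := (Matrix.exists_mulVec_eq_zero_iff).mpr hdet
  have hsum : v 0 • L.a + v 1 • L.x + v 2 • L.y + v 3 • L.rp = 0 := by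
    funext i
    have := congrFun hv i
    simpa [Pmat, Matrix.mulVec, dotProduct, Fin.sum_univ_four, mul_comm] using this
  have := Fintype.linearIndependent_iff.mp L.hbasis (fun i => v i)
  have hz := this (by simpa [Fin.sum_univ_four] using hsum)
  exact hv0 (funext fun i => hz i)

def cc : ℂ := hermForm L.a L.rp
def gg : ℂ := hermForm L.x L.y

lemma gram_eq : L.Pmatᴴ * Hmat * L.Pmat =
    !![0, 0, 0, hermForm L.rp L.a; 0, 1, hermForm L.y L.x, 0;
       0, hermForm L.x L.y, 1, 0; hermForm L.a L.rp, 0, 0, 0] := by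
  have hax := L.herm_a_x
  have hay := L.herm_a_y
  have hxa := L.herm_x_a
  have hya := L.herm_y_a
  have hxr := L.herm_x_r
  have hyr := L.herm_y_r
  have hrx := L.herm_r_x
  have hry := L.herm_r_y
  have haa := L.hnull_a
  have hrr := L.hnull_r
  have hxx := L.hx1
  have hyy := L.hy1
  ext i j
  fin_cases i <;> fin_cases j <;>
    simp only [Pmat, cc, gg, hermForm] at * <;>
    simp [Matrix.mul_apply, Matrix.conjTranspose_apply, Hmat, Fin.sum_univ_four,
      Matrix.vecHead, Matrix.vecTail, Complex.star_def]
  · linear_combination haa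
  · linear_combination hxa
  · linear_combination hya
  · ring
  · linear_combination hax
  · linear_combination hxx
  · ring
  · linear_combination hrx
  · linear_combination hay
  · ring
  · linear_combination hyy
  · linear_combination hry
  · ring
  · linear_combination hxr
  · linear_combination hyr
  · linear_combination hrr

end Lox

end Gram

section Gram2
namespace Lox
variable (L : Lox)

lemma castSucc_two : ((2 : Fin 3).castSucc : Fin 4) = 2 := rfl

lemma succAbove_three_two : (3 : Fin 4).succAbove (2 : Fin 3) = 2 := rfl

lemma Hmat_det : Hmat.det = -1 := by
  simp [Hmat, Matrix.det_succ_row_zero, Fin.sum_univ_succ, castSucc_two, succAbove_three_two]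
  norm_num

lemma normSq_identity :
    Complex.normSq L.Pmat.det = Complex.normSq L.cc * (1 - Complex.normSq L.gg) := by
  have h1 := congrArg Matrix.det L.gram_eq
  rw [Matrix.det_mul, Matrix.det_mul, Matrix.det_conjTranspose, Hmat_det] at h1
  have h2 : !![0, 0, 0, hermForm L.rp L.a; 0, 1, hermForm L.y L.x, 0;
       0, hermForm L.x L.y, 1, 0; hermForm L.a L.rp, 0, 0, 0].det
      = -(hermForm L.a L.rp * hermForm L.rp L.a
          * (1 - hermForm L.x L.y * hermForm L.y L.x)) := by
    simp [Matrix.det_succ_row_zero, Fin.sum_univ_succ, castSucc_two, succAbove_three_two]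
    ring
  rw [h2] at h1
  have hra : hermForm L.rp L.a = conj (hermForm L.a L.rp) := hermForm_conj _ _
  have hyx : hermForm L.y L.x = conj (hermForm L.x L.y) := hermForm_conj _ _
  rw [hra, hyx] at h1
  have hsd : star L.Pmat.det = conj L.Pmat.det := rfl
  rw [hsd] at h1
  have h3 : ((Complex.normSq L.Pmat.det : ℝ) : ℂ)
      = ((Complex.normSq L.cc * (1 - Complex.normSq L.gg) : ℝ) : ℂ) := by
    push_cast
    rw [← Complex.mul_conj, ← Complex.mul_conj, ← Complex.mul_conj]
    simp only [cc, gg]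
    linear_combination -h1
  exact_mod_cast h3

lemma normSq_gg_lt_one : Complex.normSq L.gg < 1 := by
  have h1 := L.normSq_identity
  have h2 : 0 < Complex.normSq L.Pmat.det := Complex.normSq_pos.mpr L.detP_ne_zero
  have h3 : 0 < Complex.normSq L.cc := Complex.normSq_pos.mpr L.herm_a_r_ne
  nlinarith

lemma combo_eq_zero {β γ : ℂ}
    (h : hermForm (β • L.x + γ • L.y) (β • L.x + γ • L.y) = 0) :
    β • L.x + γ • L.y = 0 := by
  have hyx : hermForm L.y L.x = conj L.gg := hermForm_conj _ _
  set z := β * conj γ * L.gg with hz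
  have hexp : hermForm (β • L.x + γ • L.y) (β • L.x + γ • L.y)
      = β * conj β + γ * conj γ + (z + conj z) := by
    rw [hermForm_add_left, hermForm_add_right, hermForm_add_right,
      hermForm_smul_left, hermForm_smul_left, hermForm_smul_left, hermForm_smul_left,
      hermForm_smul_right, hermForm_smul_right, hermForm_smul_right, hermForm_smul_right,
      L.hx1, L.hy1, hyx, hz]
    simp only [gg, _root_.map_mul, Complex.conj_conj]
    ring
  rw [hexp, Complex.mul_conj, Complex.mul_conj, Complex.add_conj] at h
  have hre : Complex.normSq β + Complex.normSq γ + 2 * z.re = 0 := by exact_mod_cast h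
  have hz2 : z.re ^ 2 ≤ Complex.normSq β * Complex.normSq γ * Complex.normSq L.gg := by
    have h5 : z.re ^ 2 ≤ Complex.normSq z := by
      rw [Complex.normSq_apply]; nlinarith [sq_nonneg z.im]
    calc z.re ^ 2 ≤ Complex.normSq z := h5
    _ = Complex.normSq β * Complex.normSq γ * Complex.normSq L.gg := by
        rw [hz, Complex.normSq_mul, Complex.normSq_mul, Complex.normSq_conj]
  have hng := L.normSq_gg_lt_one
  have hb0 : 0 ≤ Complex.normSq β := Complex.normSq_nonneg β
  have hg0 : 0 ≤ Complex.normSq γ := Complex.normSq_nonneg γ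
  have hng0 : 0 ≤ Complex.normSq L.gg := Complex.normSq_nonneg _
  have key : (Complex.normSq β - Complex.normSq γ)^2
      + 4 * (Complex.normSq β * Complex.normSq γ) * (1 - Complex.normSq L.gg) ≤ 0 := by
    nlinarith [hz2, hre]
  have hprod : 0 ≤ Complex.normSq β * Complex.normSq γ := mul_nonneg hb0 hg0
  have h6 : 4 * (Complex.normSq β * Complex.normSq γ) * (1 - Complex.normSq L.gg) ≤ 0 := by
    nlinarith [sq_nonneg (Complex.normSq β - Complex.normSq γ)]
  have hle : Complex.normSq β * Complex.normSq γ ≤ 0 := by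
    by_contra hgt
    push_neg at hgt
    have := mul_pos hgt (show (0:ℝ) < 1 - Complex.normSq L.gg by linarith)
    nlinarith
  have hp0 : Complex.normSq β * Complex.normSq γ = 0 := le_antisymm hle hprod
  have hsq : (Complex.normSq β - Complex.normSq γ)^2 = 0 := by
    refine le_antisymm ?_ (sq_nonneg _)
    nlinarith [key]
  have heq : Complex.normSq β = Complex.normSq γ := by
    have := pow_eq_zero_iff (n := 2) (by norm_num) |>.mp hsq
    linarith [sub_eq_zero.mp this]
  have hβ : Complex.normSq β = 0 := by
    have : Complex.normSq β * Complex.normSq β = 0 := by rw [heq] at hp0 ⊢; exact hp0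
    exact (mul_self_eq_zero).mp this
  have hγ : Complex.normSq γ = 0 := by rw [← heq]; exact hβ
  rw [Complex.normSq_eq_zero] at hβ hγ
  rw [hβ, hγ]
  simp

end Lox
end Gram2
section Spectral

namespace Lox

variable (L : Lox)

lemma spectral {V : Submodule ℂ Vec4} (hV : ∀ v ∈ V, L.M.mulVec v ∈ V)
    {α β γ δ : ℂ} (hv : α•L.a + β•L.x + γ•L.y + δ•L.rp ∈ V) :
    α•L.a ∈ V ∧ δ•L.rp ∈ V ∧ (β•L.x + γ•L.y) ∈ V := by
  have step : ∀ (μ p q s t : ℂ), (p•L.a + q•L.x + s•L.y + t•L.rp) ∈ V →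
      (((L.lamA-μ)*p)•L.a + ((L.lamX-μ)*q)•L.x + ((L.lamY-μ)*s)•L.y
        + ((L.lamR-μ)*t)•L.rp) ∈ V := by
    intro μ p q s t hmem
    have h2 : L.M.mulVec (p•L.a + q•L.x + s•L.y + t•L.rp)
        - μ • (p•L.a + q•L.x + s•L.y + t•L.rp)
        = ((L.lamA-μ)*p)•L.a + ((L.lamX-μ)*q)•L.x + ((L.lamY-μ)*s)•L.y
          + ((L.lamR-μ)*t)•L.rp := by
      rw [Matrix.mulVec_add, Matrix.mulVec_add, Matrix.mulVec_add,
        Matrix.mulVec_smul, Matrix.mulVec_smul, Matrix.mulVec_smul, Matrix.mulVec_smul,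
        L.haa, L.hxx, L.hyy, L.hrr]
      module
    exact h2 ▸ V.sub_mem (hV _ hmem) (V.smul_mem μ hmem)
  have hAX : L.lamA - L.lamX ≠ 0 := sub_ne_zero_of_ne L.lamA_ne_lamX
  have hAY : L.lamA - L.lamY ≠ 0 := sub_ne_zero_of_ne L.lamA_ne_lamY
  have hAR : L.lamA - L.lamR ≠ 0 := sub_ne_zero_of_ne L.lamA_ne_lamR
  have hRX : L.lamR - L.lamX ≠ 0 := sub_ne_zero_of_ne L.lamR_ne_lamX
  have hRY : L.lamR - L.lamY ≠ 0 := sub_ne_zero_of_ne L.lamR_ne_lamY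
  have hRA : L.lamR - L.lamA ≠ 0 := sub_ne_zero_of_ne (Ne.symm L.lamA_ne_lamR)
  have m1 := step L.lamX α β γ δ hv
  have m2 := step L.lamY _ _ _ _ m1
  have m3 := step L.lamR _ _ _ _ m2
  have m3' := step L.lamA _ _ _ _ m2
  have ha' : α • L.a ∈ V := by
    have h4 : α • L.a = ((L.lamA - L.lamR)*(L.lamA - L.lamY)*(L.lamA - L.lamX))⁻¹ •
        (((L.lamA-L.lamR)*((L.lamA-L.lamY)*((L.lamA-L.lamX)*α)))•L.a
          + ((L.lamX-L.lamR)*((L.lamX-L.lamY)*((L.lamX-L.lamX)*β)))•L.x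
          + ((L.lamY-L.lamR)*((L.lamY-L.lamY)*((L.lamY-L.lamX)*γ)))•L.y
          + ((L.lamR-L.lamR)*((L.lamR-L.lamY)*((L.lamR-L.lamX)*δ)))•L.rp) := by
      match_scalars <;> field_simp <;> ring
    rw [h4]
    exact V.smul_mem _ m3
  have hr' : δ • L.rp ∈ V := by
    have h4 : δ • L.rp = ((L.lamR - L.lamA)*(L.lamR - L.lamY)*(L.lamR - L.lamX))⁻¹ •
        (((L.lamA-L.lamA)*((L.lamA-L.lamY)*((L.lamA-L.lamX)*α)))•L.a
          + ((L.lamX-L.lamA)*((L.lamX-L.lamY)*((L.lamX-L.lamX)*β)))•L.x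
          + ((L.lamY-L.lamA)*((L.lamY-L.lamY)*((L.lamY-L.lamX)*γ)))•L.y
          + ((L.lamR-L.lamA)*((L.lamR-L.lamY)*((L.lamR-L.lamX)*δ)))•L.rp) := by
      match_scalars <;> field_simp <;> ring
    rw [h4]
    exact V.smul_mem _ m3'
  refine ⟨ha', hr', ?_⟩
  have h5 : β•L.x + γ•L.y
      = (α•L.a + β•L.x + γ•L.y + δ•L.rp) - α•L.a - δ•L.rp := by module
  rw [h5]
  exact V.sub_mem (V.sub_mem hv ha') hr'

lemma repr_eq {V : Submodule ℂ Vec4} (v : Vec4) :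
    v = (L.bas.repr v 0)•L.a + (L.bas.repr v 1)•L.x + (L.bas.repr v 2)•L.y
      + (L.bas.repr v 3)•L.rp := by
  have h := L.bas.sum_repr v
  rw [Fin.sum_univ_four] at h
  have hb : ⇑L.bas = ![L.a, L.x, L.y, L.rp] := coe_basisOfLinearIndependentOfCardEqFinrank _ _
  rw [hb] at h
  simpa using h.symm

end Lox

/-- Abstraction of the data of one loxodromic element w.r.t. an invariant subspace. -/
structure Side (V : Submodule ℂ Vec4) where
  av : Vec4
  rv : Vec4
  ha0 : hermForm av av = 0
  hr0 : hermForm rv rv = 0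
  hc : hermForm av rv ≠ 0
  decomp : ∀ v ∈ V, ∃ α δ : ℂ, ∃ u : Vec4,
    v = α • av + δ • rv + u ∧ α • av ∈ V ∧ δ • rv ∈ V ∧ u ∈ V ∧
    hermForm u av = 0 ∧ hermForm u rv = 0 ∧ (hermForm u u = 0 → u = 0)

variable {V : Submodule ℂ Vec4}

def Side.swap (S : Side V) : Side V where
  av := S.rv
  rv := S.av
  ha0 := S.hr0
  hr0 := S.ha0
  hc := by rw [hermForm_conj]; simpa using S.hc
  decomp := fun v hv => by
    obtain ⟨α, δ, u, h1, h2, h3, h4, h5, h6, h7⟩ := S.decomp v hv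
    exact ⟨δ, α, u, by rw [h1]; module, h3, h2, h4, h6, h5, h7⟩

lemma Side.av_ne_zero (S : Side V) : S.av ≠ 0 := by
  intro hc
  exact S.hc (by rw [hc, hermForm_zero_left])

lemma Side.rv_ne_zero (S : Side V) : S.rv ≠ 0 := by
  intro hc
  exact S.hc (by rw [hc, hermForm_zero_right])

/-- Construct a `Side` from a loxodromic element leaving `V` invariant. -/
def Lox.side (L : Lox) {V : Submodule ℂ Vec4} (hV : ∀ v ∈ V, L.M.mulVec v ∈ V) :
    Side V where
  av := L.a
  rv := L.rp
  ha0 := L.hnull_a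
  hr0 := L.hnull_r
  hc := L.herm_a_r_ne
  decomp := fun v hv => by
    have hrepr := L.repr_eq (V := V) v
    have hv' : (L.bas.repr v 0)•L.a + (L.bas.repr v 1)•L.x + (L.bas.repr v 2)•L.y
        + (L.bas.repr v 3)•L.rp ∈ V := by rw [← hrepr]; exact hv
    obtain ⟨h1, h2, h3⟩ := L.spectral hV hv'
    refine ⟨L.bas.repr v 0, L.bas.repr v 3,
      (L.bas.repr v 1)•L.x + (L.bas.repr v 2)•L.y, ?_,
      h1, h2, h3, ?_, ?_, fun h => L.combo_eq_zero h⟩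
    · conv_lhs => rw [hrepr]
      module
    · rw [hermForm_add_left, hermForm_smul_left, hermForm_smul_left,
        L.herm_x_a, L.herm_y_a]; ring
    · rw [hermForm_add_left, hermForm_smul_left, hermForm_smul_left,
        L.herm_x_r, L.herm_y_r]; ring

end Spectral
section Joint

variable {V : Submodule ℂ Vec4}

/-- The joint data of two loxodromic elements preserving `V`. -/
structure Joint (V : Submodule ℂ Vec4) where
  S : Side V
  T : Side V
  indep : LinearIndependent ℂ ![S.av, S.rv, T.av, T.rv]
  kill : ∀ u : Vec4, hermForm u S.av = 0 → hermForm u S.rv = 0 →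
    hermForm u T.av = 0 → hermForm u T.rv = 0 → u = 0

lemma li_perm {n : ℕ} {v : Fin 4 → Vec4} (h : LinearIndependent ℂ v) (σ : Fin n → Fin 4)
    (hσ : Function.Injective σ) {w : Fin n → Vec4} (hw : w = v ∘ σ) :
    LinearIndependent ℂ w := hw ▸ h.comp σ hσ

def Joint.swapS (J : Joint V) : Joint V where
  S := J.S.swap
  T := J.T
  indep := by
    refine li_perm J.indep ![1, 0, 2, 3] (by decide) ?_
    funext i
    fin_cases i <;> rfl
  kill := fun u h1 h2 h3 h4 => J.kill u h2 h1 h3 h4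

def Joint.swapT (J : Joint V) : Joint V where
  S := J.S
  T := J.T.swap
  indep := by
    refine li_perm J.indep ![0, 1, 3, 2] (by decide) ?_
    funext i
    fin_cases i <;> rfl
  kill := fun u h1 h2 h3 h4 => J.kill u h1 h2 h4 h3

def Joint.swapST (J : Joint V) : Joint V where
  S := J.T
  T := J.S
  indep := by
    refine li_perm J.indep ![2, 3, 0, 1] (by decide) ?_
    funext i
    fin_cases i <;> rfl
  kill := fun u h1 h2 h3 h4 => J.kill u h3 h4 h1 h2

lemma Joint.li_pair (J : Joint V) (i j : Fin 4) (hij : i ≠ j) {w1 w2 : Vec4}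
    (h1 : ![J.S.av, J.S.rv, J.T.av, J.T.rv] i = w1)
    (h2 : ![J.S.av, J.S.rv, J.T.av, J.T.rv] j = w2) :
    LinearIndependent ℂ ![w1, w2] := by
  refine li_perm J.indep ![i, j] ?_ ?_
  · intro p q hpq
    fin_cases p <;> fin_cases q <;> simp_all <;> exact absurd hpq hij
  · funext p
    fin_cases p <;> simp [← h1, ← h2]

lemma Joint.not_prop (J : Joint V) (i j : Fin 4) (hij : i ≠ j) {w1 w2 : Vec4}
    (h1 : ![J.S.av, J.S.rv, J.T.av, J.T.rv] i = w1)
    (h2 : ![J.S.av, J.S.rv, J.T.av, J.T.rv] j = w2) :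
    ∀ c : ℂ, w1 ≠ c • w2 := by
  have := linearIndependent_fin2.mp (J.li_pair i j hij h1 h2)
  have h2' : ∀ a : ℂ, a • w2 ≠ w1 := by simpa using this.2
  intro c hc
  exact h2' c hc.symm

lemma eq_span_single {v : Vec4} (hv : v ∈ V) (hv0 : v ≠ 0)
    (hd : Module.finrank ℂ V = 1) : V = Submodule.span ℂ {v} := by
  refine (Submodule.eq_of_le_of_finrank_le ?_ ?_).symm
  · simpa [Submodule.span_le] using hv
  · rw [hd, finrank_span_singleton hv0]

lemma range_pair (w1 w2 : Vec4) : Set.range ![w1, w2] = {w1, w2} := by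
  ext z
  constructor
  · rintro ⟨i, rfl⟩; fin_cases i <;> simp
  · rintro (rfl | rfl)
    exacts [⟨0, rfl⟩, ⟨1, rfl⟩]

lemma eq_span_pair {w1 w2 : Vec4} (h1 : w1 ∈ V) (h2 : w2 ∈ V)
    (hli : LinearIndependent ℂ ![w1, w2]) (hd : Module.finrank ℂ V = 2) :
    V = Submodule.span ℂ {w1, w2} := by
  refine (Submodule.eq_of_le_of_finrank_le ?_ ?_).symm
  · rw [Submodule.span_le]
    rintro z (rfl | rfl) <;> simpa
  · rw [hd, ← range_pair w1 w2, finrank_span_eq_card hli]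
    simp

lemma four_le_finrank (J : Joint V) (h1 : J.S.av ∈ V) (h2 : J.S.rv ∈ V)
    (h3 : J.T.av ∈ V) (h4 : J.T.rv ∈ V) : 4 ≤ Module.finrank ℂ V := by
  have hle : Submodule.span ℂ (Set.range ![J.S.av, J.S.rv, J.T.av, J.T.rv]) ≤ V := by
    rw [Submodule.span_le]
    rintro z ⟨i, rfl⟩
    fin_cases i <;> simpa
  have := Submodule.finrank_mono hle
  rwa [finrank_span_eq_card J.indep, Fintype.card_fin] at this

lemma Side.inU (S : Side V) (hna : S.av ∉ V) (hnr : S.rv ∉ V) {v : Vec4} (hv : v ∈ V) :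
    hermForm v S.av = 0 ∧ hermForm v S.rv = 0 ∧ (hermForm v v = 0 → v = 0) := by
  obtain ⟨α, δ, u, h1, h2, h3, h4, h5, h6, h7⟩ := S.decomp v hv
  have hα : α = 0 := by
    by_contra hα
    exact hna (by simpa [smul_smul, inv_mul_cancel₀ hα] using V.smul_mem α⁻¹ h2)
  have hδ : δ = 0 := by
    by_contra hδ
    exact hnr (by simpa [smul_smul, inv_mul_cancel₀ hδ] using V.smul_mem δ⁻¹ h3)
  rw [hα, hδ] at h1
  simp only [zero_smul, zero_add] at h1
  rw [h1]
  exact ⟨h5, h6, h7⟩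

end Joint
section Dims

variable {V : Submodule ℂ Vec4}

lemma conj_ne_zero {z : ℂ} (hz : z ≠ 0) : conj z ≠ 0 :=
  fun h => hz (by simpa using congrArg conj h)

lemma key_calc {c α δ s t : ℂ} (hc : c ≠ 0) (hδ : δ ≠ 0)
    (hw : α * conj δ * c + δ * conj α * conj c = 0)
    (hu : s * conj δ * c + t * conj α * conj c = 0) :
    s * conj t * c + t * conj s * conj c = 0 := by
  have hu2 : conj s * δ * conj c + conj t * α * c = 0 := by
    have := congrArg conj hu
    simpa [map_add, _root_.map_mul, Complex.conj_conj] using this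
  have hG : (s * conj t * c + t * conj s * conj c) * (δ * conj δ * c * conj c) =
      ((conj t * δ * c * conj c) * (s * conj δ * c + t * conj α * conj c)
        + (t * conj δ * c * conj c) * (conj s * δ * conj c + conj t * α * c)
        - (t * conj t * c * conj c) * (α * conj δ * c + δ * conj α * conj c)) := by
    ring
  rw [hu, hu2, hw] at hG
  simp only [mul_zero, add_zero, sub_zero, zero_add, zero_sub, neg_zero] at hG
  rcases mul_eq_zero.mp hG with h | h
  · exact h
  · exact absurd h (by
      exact mul_ne_zero (mul_ne_zero (mul_ne_zero hδ (conj_ne_zero hδ)) hc) (conj_ne_zero hc))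

/-- dim 1, spike case. -/
lemma aux1 (J : Joint V) (hd : Module.finrank ℂ V = 1) (hin : J.S.av ∈ V) : False := by
  obtain ⟨α, δ, u, h1, h2, h3, h4, h5, h6, h7⟩ := J.T.decomp J.S.av hin
  have hα : α = 0 := by
    by_contra hα
    have hTa : J.T.av ∈ V := by
      simpa [smul_smul, inv_mul_cancel₀ hα] using V.smul_mem α⁻¹ h2
    have hVs : V = Submodule.span ℂ {J.S.av} := eq_span_single hin J.S.av_ne_zero hd
    have hTa2 := hVs.le hTa
    rw [Submodule.mem_span_singleton] at hTa2
    obtain ⟨k, hk⟩ := hTa2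
    exact J.not_prop 2 0 (by decide) rfl rfl k hk.symm
  have hδ : δ = 0 := by
    by_contra hδ
    have hTr : J.T.rv ∈ V := by
      simpa [smul_smul, inv_mul_cancel₀ hδ] using V.smul_mem δ⁻¹ h3
    have hVs : V = Submodule.span ℂ {J.S.av} := eq_span_single hin J.S.av_ne_zero hd
    have hTr2 := hVs.le hTr
    rw [Submodule.mem_span_singleton] at hTr2
    obtain ⟨k, hk⟩ := hTr2
    exact J.not_prop 3 0 (by decide) rfl rfl k hk.symm
  rw [hα, hδ] at h1
  simp only [zero_smul, zero_add] at h1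
  exact J.S.av_ne_zero (by rw [h1]; exact h7 (by rw [← h1]; exact J.S.ha0))

/-- dim 1 is impossible. -/
lemma dim1 (J : Joint V) (hd : Module.finrank ℂ V = 1) : False := by
  have hVbot : V ≠ ⊥ := by
    intro h
    rw [h] at hd
    simp at hd
  obtain ⟨v, hv, hv0⟩ := V.ne_bot_iff.mp hVbot
  obtain ⟨α, δ, u, h1, h2, h3, h4, h5, h6, h7⟩ := J.S.decomp v hv
  by_cases hα : α = 0
  · by_cases hδ : δ = 0
    · rw [hα, hδ] at h1
      simp only [zero_smul, zero_add] at h1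
      subst h1
      obtain ⟨α', δ', u', g1, g2, g3, g4, g5, g6, g7⟩ := J.T.decomp v hv
      by_cases hα' : α' = 0
      · by_cases hδ' : δ' = 0
        · rw [hα', hδ'] at g1
          simp only [zero_smul, zero_add] at g1
          subst g1
          exact hv0 (J.kill v h5 h6 g5 g6)
        · have hTr : J.T.rv ∈ V := by
            simpa [smul_smul, inv_mul_cancel₀ hδ'] using V.smul_mem δ'⁻¹ g3
          exact aux1 J.swapST.swapS hd hTr
      · have hTa : J.T.av ∈ V := by
          simpa [smul_smul, inv_mul_cancel₀ hα'] using V.smul_mem α'⁻¹ g2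
        exact aux1 J.swapST hd hTa
    · have hSr : J.S.rv ∈ V := by
        simpa [smul_smul, inv_mul_cancel₀ hδ] using V.smul_mem δ⁻¹ h3
      exact aux1 J.swapS hd hSr
  · have hSa : J.S.av ∈ V := by
      simpa [smul_smul, inv_mul_cancel₀ hα] using V.smul_mem α⁻¹ h2
    exact aux1 J hd hSa

end Dims
section Dim2

variable {V : Submodule ℂ Vec4}

lemma Side.noNull (S : Side V) (hna : S.av ∉ V) (hnr : S.rv ∉ V) {w : Vec4}
    (hwV : w ∈ V) (hw0 : hermForm w w = 0) (hwne : w ≠ 0) : False := by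
  obtain ⟨-, -, hpos⟩ := S.inU hna hnr hwV
  exact hwne (hpos hw0)

lemma exists_u (S : Side V) (hd : Module.finrank ℂ V = 2) (hnr : S.rv ∉ V) :
    ∃ u, u ∈ V ∧ u ≠ 0 ∧ hermForm u S.av = 0 ∧ hermForm u S.rv = 0 ∧
      (hermForm u u = 0 → u = 0) := by
  by_contra hno
  have hle : V ≤ Submodule.span ℂ {S.av} := by
    intro v hv
    obtain ⟨α, δ, u, h1, h2, h3, h4, h5, h6, h7⟩ := S.decomp v hv
    have hδ : δ = 0 := by
      by_contra hδ
      exact hnr (by simpa [smul_smul, inv_mul_cancel₀ hδ] using V.smul_mem δ⁻¹ h3)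
    have hu : u = 0 := by
      by_contra hu
      exact hno ⟨u, h4, hu, h5, h6, h7⟩
    rw [hδ, hu] at h1
    simp only [zero_smul, add_zero] at h1
    exact Submodule.mem_span_singleton.mpr ⟨α, h1.symm⟩
  have hfr := Submodule.finrank_mono hle
  rw [hd, finrank_span_singleton S.av_ne_zero] at hfr
  omega

lemma core2 (J : Joint V) (hd : Module.finrank ℂ V = 2) (hSa : J.S.av ∈ V)
    (hSr : J.S.rv ∈ V) (hTa : J.T.av ∈ V) (hTr : J.T.rv ∉ V) : False := by
  have hli : LinearIndependent ℂ ![J.S.av, J.S.rv] := J.li_pair 0 1 (by decide) rfl rfl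
  have hVs : V = Submodule.span ℂ {J.S.av, J.S.rv} := eq_span_pair hSa hSr hli hd
  obtain ⟨α, δ, hαδ⟩ := Submodule.mem_span_pair.mp (hVs.le hTa)
  have hα : α ≠ 0 := by
    rintro rfl
    simp only [zero_smul, zero_add] at hαδ
    exact J.not_prop 2 1 (by decide) rfl rfl δ hαδ.symm
  have hδ : δ ≠ 0 := by
    rintro rfl
    simp only [zero_smul, add_zero] at hαδ
    exact J.not_prop 2 0 (by decide) rfl rfl α hαδ.symm
  obtain ⟨u, huV, hu0, hua, hur, hupos⟩ := exists_u J.T hd hTr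
  obtain ⟨s, t, hst⟩ := Submodule.mem_span_pair.mp (hVs.le huV)
  have hrc : hermForm J.S.rv J.S.av = conj (hermForm J.S.av J.S.rv) := hermForm_conj _ _
  have hw : α * conj δ * hermForm J.S.av J.S.rv
      + δ * conj α * conj (hermForm J.S.av J.S.rv) = 0 := by
    have h0 := J.T.ha0
    rw [← hαδ] at h0
    simp only [hermForm_add_left, hermForm_add_right, hermForm_smul_left,
      hermForm_smul_right, J.S.ha0, J.S.hr0, hrc] at h0
    linear_combination h0
  have hu' : s * conj δ * hermForm J.S.av J.S.rv
      + t * conj α * conj (hermForm J.S.av J.S.rv) = 0 := by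
    have h0 := hua
    rw [← hαδ, ← hst] at h0
    simp only [hermForm_add_left, hermForm_add_right, hermForm_smul_left,
      hermForm_smul_right, J.S.ha0, J.S.hr0, hrc] at h0
    linear_combination h0
  have hkey := key_calc J.S.hc hδ hw hu'
  have huu : hermForm u u = 0 := by
    rw [← hst]
    simp only [hermForm_add_left, hermForm_add_right, hermForm_smul_left,
      hermForm_smul_right, J.S.ha0, J.S.hr0, hrc]
    linear_combination hkey
  exact hu0 (hupos huu)

lemma core11 (J : Joint V) (hd : Module.finrank ℂ V = 2) (hSa : J.S.av ∈ V)
    (hSr : J.S.rv ∉ V) {w : Vec4} (hwV : w ∈ V) (hw0 : hermForm w w = 0)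
    (hli : LinearIndependent ℂ ![J.S.av, w]) : False := by
  have hVs : V = Submodule.span ℂ {J.S.av, w} := eq_span_pair hSa hwV hli hd
  obtain ⟨u, huV, hu0, hua, hur, hupos⟩ := exists_u J.S hd hSr
  obtain ⟨p, q, hpq⟩ := Submodule.mem_span_pair.mp (hVs.le huV)
  by_cases hwa : hermForm w J.S.av = 0
  · have haw : hermForm J.S.av w = 0 := by rw [hermForm_conj, hwa, map_zero]
    have huu : hermForm u u = 0 := by
      rw [← hpq]
      simp only [hermForm_add_left, hermForm_add_right, hermForm_smul_left,
        hermForm_smul_right, J.S.ha0, hw0, hwa, haw]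
      ring
    exact hu0 (hupos huu)
  · have hq : q = 0 := by
      have h0 := hua
      rw [← hpq] at h0
      simp only [hermForm_add_left, hermForm_smul_left, J.S.ha0] at h0
      have h1 : q * hermForm w J.S.av = 0 := by linear_combination h0
      exact (mul_eq_zero.mp h1).resolve_right hwa
    have hp : p = 0 := by
      have h0 := hur
      rw [← hpq] at h0
      rw [hq] at h0
      simp only [hermForm_add_left, hermForm_smul_left, zero_smul, add_zero,
        hermForm_zero_left] at h0
      have h1 : p * hermForm J.S.av J.S.rv = 0 := by linear_combination h0
      exact (mul_eq_zero.mp h1).resolve_right J.S.hc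
    rw [hp, hq] at hpq
    simp only [zero_smul, add_zero, zero_add] at hpq
    exact hu0 hpq.symm

lemma none_none (J : Joint V) (hd : Module.finrank ℂ V = 2) (h1 : J.S.av ∉ V)
    (h2 : J.S.rv ∉ V) (h3 : J.T.av ∉ V) (h4 : J.T.rv ∉ V) : False := by
  have hVbot : V ≠ ⊥ := by
    intro h
    rw [h] at hd
    simp at hd
  obtain ⟨v, hv, hv0⟩ := V.ne_bot_iff.mp hVbot
  obtain ⟨ha1, ha2, -⟩ := J.S.inU h1 h2 hv
  obtain ⟨hb1, hb2, -⟩ := J.T.inU h3 h4 hv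
  exact hv0 (J.kill v ha1 ha2 hb1 hb2)

/-- dim 2 is impossible. -/
lemma dim2 (J : Joint V) (hd : Module.finrank ℂ V = 2) : False := by
  by_cases hSa : J.S.av ∈ V <;> by_cases hSr : J.S.rv ∈ V <;>
    by_cases hTa : J.T.av ∈ V <;> by_cases hTr : J.T.rv ∈ V
  · have := four_le_finrank J hSa hSr hTa hTr
    omega
  · exact core2 J hd hSa hSr hTa hTr
  · exact core2 J.swapT hd hSa hSr hTr hTa
  · exact J.T.noNull hTa hTr hSa J.S.ha0 J.S.av_ne_zero
  · exact core2 J.swapST hd hTa hTr hSa hSr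
  · exact core11 J hd hSa hSr hTa J.T.ha0 (J.li_pair 0 2 (by decide) rfl rfl)
  · exact core11 J hd hSa hSr hTr J.T.hr0 (J.li_pair 0 3 (by decide) rfl rfl)
  · exact J.T.noNull hTa hTr hSa J.S.ha0 J.S.av_ne_zero
  · exact core2 J.swapST.swapT hd hTa hTr hSr hSa
  · exact core11 J.swapS hd hSr hSa hTa J.T.ha0 (J.li_pair 1 2 (by decide) rfl rfl)
  · exact core11 J.swapS hd hSr hSa hTr J.T.hr0 (J.li_pair 1 3 (by decide) rfl rfl)
  · exact J.T.noNull hTa hTr hSr J.S.hr0 J.S.rv_ne_zero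
  · exact J.S.noNull hSa hSr hTa J.T.ha0 J.T.av_ne_zero
  · exact J.S.noNull hSa hSr hTa J.T.ha0 J.T.av_ne_zero
  · exact J.S.noNull hSa hSr hTr J.T.hr0 J.T.rv_ne_zero
  · exact none_none J hd hSa hSr hTa hTr

end Dim2
section Perp

/-- The `hermForm`-orthogonal complement (on the left). -/
def perpH (V : Submodule ℂ Vec4) : Submodule ℂ Vec4 where
  carrier := {w | ∀ v ∈ V, hermForm w v = 0}
  add_mem' := by
    intro a b ha hb v hv
    rw [hermForm_add_left, ha v hv, hb v hv, add_zero]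
  zero_mem' := fun v _ => hermForm_zero_left v
  smul_mem' := by
    intro c a ha v hv
    rw [hermForm_smul_left, ha v hv, mul_zero]

lemma mem_perpH {V : Submodule ℂ Vec4} {w : Vec4} :
    w ∈ perpH V ↔ ∀ v ∈ V, hermForm w v = 0 := Iff.rfl

lemma Hmat_mul_Hmat : Hmat * Hmat = 1 := by
  ext i j
  fin_cases i <;> fin_cases j <;>
    simp [Hmat, Matrix.mul_apply, Fin.sum_univ_four, Matrix.one_apply,
      Matrix.vecHead, Matrix.vecTail]

/-- `H` as a linear equivalence. -/
def Heq : Vec4 ≃ₗ[ℂ] Vec4 :=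
  LinearEquiv.ofLinear Hmat.mulVecLin Hmat.mulVecLin
    (by rw [← Matrix.mulVecLin_mul, Hmat_mul_Hmat, Matrix.mulVecLin_one])
    (by rw [← Matrix.mulVecLin_mul, Hmat_mul_Hmat, Matrix.mulVecLin_one])

/-- The standard euclidean space. -/
abbrev E4 := EuclideanSpace ℂ (Fin 4)

def eE : Vec4 ≃ₗ[ℂ] E4 := (WithLp.linearEquiv 2 ℂ (Fin 4 → ℂ)).symm

lemma perpH_eq (V : Submodule ℂ Vec4) :
    perpH V = Submodule.comap (Heq.trans eE).toLinearMap
      (Submodule.map (eE : Vec4 →ₗ[ℂ] E4) V)ᗮ := by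
  ext w
  rw [mem_perpH, Submodule.mem_comap, Submodule.mem_orthogonal]
  constructor
  · rintro h _ ⟨v, hv, rfl⟩
    have := h v hv
    rw [hermForm_eq_dot] at this
    simpa [PiLp.inner_apply, eE, dotProduct, Heq, RCLike.inner_apply,
      Fin.sum_univ_four, mul_comm] using this
  · intro h v hv
    have := h (eE v) ⟨v, hv, rfl⟩
    rw [hermForm_eq_dot]
    simpa [PiLp.inner_apply, eE, dotProduct, Heq, RCLike.inner_apply,
      Fin.sum_univ_four, mul_comm] using this

lemma finrank_perpH (V : Submodule ℂ Vec4) :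
    Module.finrank ℂ (perpH V) = 4 - Module.finrank ℂ V := by
  rw [perpH_eq]
  rw [Submodule.comap_equiv_eq_map_symm]
  rw [LinearEquiv.finrank_map_eq]
  have h1 : Module.finrank ℂ (Submodule.map (eE : Vec4 →ₗ[ℂ] E4) V)
      + Module.finrank ℂ (Submodule.map (eE : Vec4 →ₗ[ℂ] E4) V)ᗮ
      = Module.finrank ℂ E4 := Submodule.finrank_add_finrank_orthogonal _
  have h2 : Module.finrank ℂ (Submodule.map (eE : Vec4 →ₗ[ℂ] E4) V)
      = Module.finrank ℂ V := LinearEquiv.finrank_map_eq eE V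
  have h3 : Module.finrank ℂ E4 = 4 := finrank_euclideanSpace_fin
  omega

lemma perpH_invariant {V : Submodule ℂ Vec4} {M : Mat4} (hM : isSU31 M)
    (hV : ∀ v ∈ V, M.mulVec v ∈ V) : ∀ w ∈ perpH V, M.mulVec w ∈ perpH V := by
  intro w hw v hv
  haveI : Invertible M := M.invertibleOfIsUnitDet (by rw [hM.2]; exact isUnit_one)
  have hMinj : Function.Injective (M.mulVec) := by
    intro x y hxy
    have := congrArg (fun z => (⅟M).mulVec z) hxy
    simpa [Matrix.mulVec_mulVec, invOf_mul_self] using this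
  set f : V →ₗ[ℂ] V := M.mulVecLin.restrict (p := V) (q := V) (fun x hx => hV x hx)
  have hfinj : Function.Injective f := by
    intro x y hxy
    have : M.mulVec x.1 = M.mulVec y.1 := congrArg Subtype.val hxy
    exact Subtype.ext (hMinj this)
  obtain ⟨u, hu⟩ := (LinearMap.injective_iff_surjective.mp hfinj) ⟨v, hv⟩
  have huv : M.mulVec u.1 = v := congrArg Subtype.val hu
  rw [← huv, herm_mulVec hM.1]
  exact hw u.1 u.2

end Perp
section Main

lemma span_top_of_li4 {f : Fin 4 → Vec4} (h : LinearIndependent ℂ f) :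
    Submodule.span ℂ (Set.range f) = ⊤ :=
  h.span_eq_top_of_card_eq_finrank (by simp [Module.finrank_pi])

/-- Construct the joint data from a non-singular pair preserving `V`. -/
def mkJoint (A B : Lox) (h : NonSingular A B) {V : Submodule ℂ Vec4}
    (hAV : ∀ v ∈ V, A.M.mulVec v ∈ V) (hBV : ∀ v ∈ V, B.M.mulVec v ∈ V) :
    Joint V where
  S := A.side hAV
  T := B.side hBV
  indep := h.2.1
  kill := fun u h1 h2 h3 h4 => by
    refine herm_eq_zero_of_span (f := ![A.a, A.rp, B.a, B.rp])
      (span_top_of_li4 h.2.1) ?_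
    intro i
    fin_cases i
    · simpa [Lox.side] using h1
    · simpa [Lox.side] using h2
    · simpa [Lox.side] using h3
    · simpa [Lox.side] using h4

end Main
/-- a non-singular pair of loxodromic elements admits no common
invariant proper nonzero complex subspace of ℂ⁴; in particular the group
generated by `A` and `B` is irreducible. -/
theorem nonSingular_irreducible (A B : Lox) (h : NonSingular A B) :
    ¬ ∃ V : Submodule ℂ Vec4,
        0 < Module.finrank ℂ ↥V ∧ Module.finrank ℂ ↥V < 4 ∧
        (∀ v ∈ V, A.M.mulVec v ∈ V) ∧ (∀ v ∈ V, B.M.mulVec v ∈ V) := by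
  rintro ⟨V, hpos, hlt, hAV, hBV⟩
  have hd : Module.finrank ℂ V = 1 ∨ Module.finrank ℂ V = 2
      ∨ Module.finrank ℂ V = 3 := by omega
  rcases hd with hd | hd | hd
  · exact dim1 (mkJoint A B h hAV hBV) hd
  · exact dim2 (mkJoint A B h hAV hBV) hd
  · have hW1 : Module.finrank ℂ (perpH V) = 1 := by rw [finrank_perpH, hd]
    exact dim1 (mkJoint A B h (perpH_invariant A.hM hAV) (perpH_invariant B.hM hBV)) hW1
end
end
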